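/- Let Y be a free ℤ-module of finite rank, (α, α∨) a root/coroot pair (α ∈ Hom_ℤ(Y,ℤ), α∨ ∈ Y, ⟨α, α∨⟩ = 2), and Q : Y → ℤ a quadratic form invariant under the reflection s_α(y) = y − ⟨α, y⟩·α∨. Fix a positive integer n and set n_α := n / gcd(n, Q(α∨)) and Y_{Q,n} := {y ∈ Y : n divides B_Q(y, z) for all z ∈ Y}. Then for every y ∈ Y_{Q,n}, the integer n_α divides ⟨α, y⟩. -/

import Mathlib

/-- Let `(α, α∨)` be a root/coroot pair and `Q` a reflection-invariant `ℤ`-valued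
quadratic form on the lattice `Y`.  For a positive integer `n`, set
`n_α = n / gcd(n, Q(α∨))` and `Y_{Q,n} = {y : n ∣ B_Q(y, z) for all z}`.
Then `n_α ∣ ⟨α, y⟩` for every `y ∈ Y_{Q,n}`. -/
theorem stmt_2 (Y : Type*) [AddCommGroup Y] [Module ℤ Y]
    [Module.Free ℤ Y] [Module.Finite ℤ Y]
    (Q : QuadraticForm ℤ Y) (α : Y →ₗ[ℤ] ℤ) (αv : Y)
    (hpair : α αv = 2)
    (hW : ∀ y : Y, Q (y - α y • αv) = Q y)
    (n : ℕ) (hn : 0 < n) (y : Y)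
    (hy : ∀ z : Y, (n : ℤ) ∣ QuadraticMap.polar (⇑Q) y z) :
    ((n / Int.gcd (n : ℤ) (Q αv) : ℕ) : ℤ) ∣ α y := by
  have key : α y * (α y * Q αv) = α y * QuadraticMap.polar (⇑Q) y αv := by
    have h := hW y
    rw [sub_eq_add_neg, ← neg_zsmul] at h
    have e := Int.cast_smul_eq_zsmul ℤ (-(α y)) αv
    rw [Int.cast_id] at e
    rw [← e] at h
    rw [QuadraticMap.map_add Q, QuadraticMap.map_smul, QuadraticMap.polar_smul_right] at h
    have h' : Q y + -α y * -α y * Q αv + -α y * QuadraticMap.polar (⇑Q) y αv = Q y := by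
      simpa [smul_eq_mul] using h
    nlinarith [h']
  set a : ℤ := α y with ha
  set q : ℤ := Q αv with hq
  rcases eq_or_ne a 0 with h0 | h0
  · simp [h0]
  · have hBa : a * q = QuadraticMap.polar (⇑Q) y αv := by
      exact mul_left_cancel₀ h0 key
    have hdvd : (n : ℤ) ∣ a * q := hBa ▸ hy αv
    -- number theory
    set g : ℕ := Int.gcd (n : ℤ) q with hg
    have hgpos : 0 < g := Int.gcd_pos_of_ne_zero_left _ (by exact_mod_cast hn.ne')
    have hgn : (g : ℤ) ∣ (n : ℤ) := Int.gcd_dvd_left _ _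
    have hgq : (g : ℤ) ∣ q := Int.gcd_dvd_right _ _
    have hcop : IsCoprime ((n : ℤ) / g) (q / g) := by
      rw [Int.isCoprime_iff_gcd_eq_one]
      exact Int.gcd_div_gcd_div_gcd (by exact_mod_cast hgpos)
    have hdvd2 : ((n : ℤ) / g) ∣ a * (q / g) := by
      obtain ⟨k, hk⟩ := hdvd
      refine ⟨k, ?_⟩
      have h1 : (g : ℤ) * ((n : ℤ) / g) = n := Int.mul_ediv_cancel' hgn
      have h2 : (g : ℤ) * (q / g) = q := Int.mul_ediv_cancel' hgq
      have : (g : ℤ) * (a * (q / g)) = (g : ℤ) * ((n : ℤ) / g * k) := by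
        rw [← mul_assoc, mul_comm (g:ℤ) a, mul_assoc, h2, ← mul_assoc, h1, ← hk]
      exact mul_left_cancel₀ (by exact_mod_cast hgpos.ne') this
    have : ((n : ℤ) / g) ∣ a := hcop.dvd_of_dvd_mul_right hdvd2
    have hcast : ((n / g : ℕ) : ℤ) = (n : ℤ) / g :=
      Int.natCast_ediv n g
    rw [hg] at hcast ⊢
    rw [hcast]
    exact this
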